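/- arXiv:2409.01478 — 2 statements merged into one kernel-verified Lean document; each statement's English description precedes it below -/
import Mathlib

section
/- For all r > 0 and C > 0, the identity sqrt(C+r)/r = ∫₀^∞ e^{-s r} f(s;C) ds holds, where f(s;C) = (1/√(πs)) (e^{-C s} + √(π C s) · erf(√(C s))) and erf(x) = (2/√π) ∫₀^x e^{-t²} dt. -/
open Real MeasureTheory Set

/-- The Gauss error function. -/
noncomputable def erf (x : ℝ) : ℝ := (2 / Real.sqrt π) * ∫ t in (0:ℝ)..x, Real.exp (-t^2)

/-- The kernel `f(s; C)`. -/
noncomputable def fker (s C : ℝ) : ℝ :=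
  (1 / Real.sqrt (π * s)) * (Real.exp (-C * s) + Real.sqrt (π * C * s) * erf (Real.sqrt (C * s)))

lemma hasDerivAt_erf (x : ℝ) : HasDerivAt erf ((2 / Real.sqrt π) * Real.exp (-x^2)) x := by
  have cont : Continuous fun t : ℝ => Real.exp (-t^2) := by fun_prop
  have h : HasDerivAt (fun u : ℝ => ∫ t in (0:ℝ)..u, Real.exp (-t^2)) (Real.exp (-x^2)) x :=
    intervalIntegral.integral_hasDerivAt_right (cont.intervalIntegrable 0 x)
      (cont.stronglyMeasurableAtFilter _ _) cont.continuousAt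
  exact h.const_mul _

lemma continuous_erf : Continuous erf :=
  continuous_iff_continuousAt.2 fun x => (hasDerivAt_erf x).continuousAt

lemma erf_zero : erf 0 = 0 := by simp [erf]

lemma erf_nonneg {x : ℝ} (hx : 0 ≤ x) : 0 ≤ erf x := by
  have : 0 ≤ ∫ t in (0:ℝ)..x, Real.exp (-t^2) :=
    intervalIntegral.integral_nonneg hx (fun t _ => (Real.exp_pos _).le)
  have h2 : 0 ≤ 2 / Real.sqrt π := by positivity
  exact mul_nonneg h2 this

lemma erf_le_one {x : ℝ} (hx : 0 ≤ x) : erf x ≤ 1 := by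
  have hint : IntegrableOn (fun t : ℝ => Real.exp (-t^2)) (Ioi 0) := by
    have := (integrable_exp_neg_mul_sq one_pos).integrableOn (s := Ioi (0:ℝ))
    simpa using this
  have h1 : (∫ t in (0:ℝ)..x, Real.exp (-t^2)) ≤ ∫ t in Ioi (0:ℝ), Real.exp (-t^2) := by
    rw [intervalIntegral.integral_of_le hx]
    refine setIntegral_mono_set hint ?_ ?_
    · filter_upwards with t using (Real.exp_pos _).le
    · filter_upwards with t using fun ht => ht.1
  have h2 : (∫ t in Ioi (0:ℝ), Real.exp (-t^2)) = Real.sqrt π / 2 := by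
    have := integral_gaussian_Ioi 1
    simpa using this
  rw [h2] at h1
  have hpi : (0:ℝ) < Real.sqrt π := Real.sqrt_pos.2 Real.pi_pos
  calc erf x ≤ (2 / Real.sqrt π) * (Real.sqrt π / 2) := by
        refine mul_le_mul_of_nonneg_left h1 (by positivity)
    _ = 1 := by field_simp

lemma integral_exp_div_sqrt {a : ℝ} (ha : 0 < a) :
    ∫ s in Ioi (0:ℝ), s ^ (-(1/2) : ℝ) * Real.exp (-(a * s)) = Real.sqrt π / Real.sqrt a := by
  have := Real.integral_rpow_mul_exp_neg_mul_Ioi one_half_pos ha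
  rw [Real.Gamma_one_half_eq] at this
  have h12 : (1/2 - 1 : ℝ) = -(1/2) := by norm_num
  rw [h12] at this
  rw [this, ← Real.sqrt_eq_rpow, one_div, Real.sqrt_inv]
  ring

lemma integrableOn_exp_div_sqrt {a : ℝ} (ha : 0 < a) :
    IntegrableOn (fun s : ℝ => s ^ (-(1/2) : ℝ) * Real.exp (-(a * s))) (Ioi 0) := by
  by_contra h
  have h0 := integral_undef h
  rw [integral_exp_div_sqrt ha] at h0
  have : (0:ℝ) < Real.sqrt π / Real.sqrt a := by positivity
  linarith [h0 ▸ this]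

lemma integrableOn_A {r C : ℝ} (hr : 0 < r) (hC : 0 < C) :
    IntegrableOn (fun s : ℝ => Real.exp (-s*r) * erf (Real.sqrt (C*s))) (Ioi 0) := by
  have hg : IntegrableOn (fun s : ℝ => Real.exp (-r*s)) (Ioi 0) :=
    exp_neg_integrableOn_Ioi 0 hr
  refine Integrable.mono hg ?_ ?_
  · exact ((Real.continuous_exp.comp (continuous_id.neg.mul continuous_const)).mul
      (continuous_erf.comp (Real.continuous_sqrt.comp (continuous_const.mul continuous_id)))).aestronglyMeasurable
  · filter_upwards [ae_restrict_mem measurableSet_Ioi] with s hs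
    have h1 : 0 ≤ erf (Real.sqrt (C*s)) := erf_nonneg (Real.sqrt_nonneg _)
    have h2 : erf (Real.sqrt (C*s)) ≤ 1 := erf_le_one (Real.sqrt_nonneg _)
    rw [Real.norm_eq_abs, Real.norm_eq_abs, abs_of_nonneg (by positivity),
      abs_of_nonneg (Real.exp_pos _).le]
    calc Real.exp (-s*r) * erf (Real.sqrt (C*s)) ≤ Real.exp (-s*r) * 1 :=
          mul_le_mul_of_nonneg_left h2 (Real.exp_pos _).le
      _ = Real.exp (-r*s) := by rw [mul_one]; ring_nf

lemma integrableOn_B {r C : ℝ} (hr : 0 < r) (hC : 0 < C) :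
    IntegrableOn (fun s : ℝ =>
      (C/(r*Real.sqrt π)) * (Real.exp (-((C+r)*s)) / Real.sqrt (C*s))) (Ioi 0) := by
  have h : IntegrableOn (fun s : ℝ => C/(r*Real.sqrt π) * (Real.sqrt C)⁻¹ *
      (s ^ (-(1/2) : ℝ) * Real.exp (-((C+r) * s)))) (Ioi 0) :=
    ((integrableOn_exp_div_sqrt (by linarith : (0:ℝ) < C + r)).const_mul
      (C/(r*Real.sqrt π) * (Real.sqrt C)⁻¹))
  refine h.congr_fun (fun s hs => ?_) measurableSet_Ioi
  have hs' : (0:ℝ) < s := hs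
  dsimp only
  rw [Real.sqrt_mul hC.le, Real.rpow_neg hs'.le, ← Real.sqrt_eq_rpow]
  have h1 : Real.sqrt s ≠ 0 := (Real.sqrt_pos.2 hs').ne'
  have h2 : Real.sqrt C ≠ 0 := (Real.sqrt_pos.2 hC).ne'
  field_simp

lemma laplace_erf {r C : ℝ} (hr : 0 < r) (hC : 0 < C) :
    ∫ s in Ioi (0:ℝ), Real.exp (-s*r) * erf (Real.sqrt (C*s)) =
      Real.sqrt C / (r * Real.sqrt (C+r)) := by
  set f : ℝ → ℝ := fun s => -(1/r) * (Real.exp (-s*r) * erf (Real.sqrt (C*s))) with hfdef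
  set A : ℝ → ℝ := fun s => Real.exp (-s*r) * erf (Real.sqrt (C*s)) with hA
  set B : ℝ → ℝ := fun s =>
      (C/(r*Real.sqrt π)) * (Real.exp (-((C+r)*s)) / Real.sqrt (C*s)) with hB
  have hderiv : ∀ s ∈ Ioi (0:ℝ), HasDerivAt f (A s - B s) s := by
    intro s hs
    have hs' : (0:ℝ) < s := hs
    have hexp : HasDerivAt (fun x : ℝ => Real.exp (-x*r)) (Real.exp (-s*r) * (-1*r)) s :=
      ((hasDerivAt_id s).neg.mul_const r).exp
    have hCs : HasDerivAt (fun x : ℝ => C*x) (C*1) s := (hasDerivAt_id s).const_mul C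
    have hsqrt : HasDerivAt (fun x : ℝ => Real.sqrt (C*x)) (1/(2*Real.sqrt (C*s)) * (C*1)) s :=
      (Real.hasDerivAt_sqrt (mul_pos hC hs').ne').comp s hCs
    have herf : HasDerivAt (fun x : ℝ => erf (Real.sqrt (C*x)))
        ((2/Real.sqrt π) * Real.exp (-(Real.sqrt (C*s))^2) * (1/(2*Real.sqrt (C*s)) * (C*1))) s :=
      by have := (hasDerivAt_erf (Real.sqrt (C*s))).comp s hsqrt; exact this
    have hf := (hexp.mul herf).const_mul (-(1/r))
    refine hf.congr_deriv (Eq.symm ?_)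
    rw [Real.sq_sqrt (mul_pos hC hs').le]
    have hE : Real.exp (-((C+r)*s)) = Real.exp (-s*r) * Real.exp (-(C*s)) := by
      rw [← Real.exp_add]; ring_nf
    simp only [hA, hB]
    rw [hE]
    have h1 : Real.sqrt π ≠ 0 := (Real.sqrt_pos.2 Real.pi_pos).ne'
    have h2 : Real.sqrt (C*s) ≠ 0 := (Real.sqrt_pos.2 (mul_pos hC hs')).ne'
    field_simp
    ring
  have hAint : IntegrableOn A (Ioi 0) := integrableOn_A hr hC
  have hBint : IntegrableOn B (Ioi 0) := integrableOn_B hr hC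
  have hcont : ContinuousWithinAt f (Ici 0) 0 := by
    have : Continuous f := by
      apply continuous_const.mul
      exact (Real.continuous_exp.comp (continuous_id.neg.mul continuous_const)).mul
        (continuous_erf.comp (Real.continuous_sqrt.comp (continuous_const.mul continuous_id)))
    exact this.continuousWithinAt
  have htend : Filter.Tendsto f Filter.atTop (nhds 0) := by
    have hexp0 : Filter.Tendsto (fun s : ℝ => Real.exp (-s*r)) Filter.atTop (nhds 0) := by
      have hm : Filter.Tendsto (fun s : ℝ => s * r) Filter.atTop Filter.atTop :=
        Filter.Tendsto.atTop_mul_const hr Filter.tendsto_id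
      have := Real.tendsto_exp_neg_atTop_nhds_zero.comp hm
      simpa [Function.comp_def, neg_mul] using this
    have hlow : Filter.Tendsto (fun s : ℝ => -(1/r) * Real.exp (-s*r)) Filter.atTop (nhds 0) := by
      simpa using hexp0.const_mul (-(1/r))
    refine tendsto_of_tendsto_of_tendsto_of_le_of_le' hlow
      (tendsto_const_nhds : Filter.Tendsto (fun _ : ℝ => (0:ℝ)) _ _) ?_ ?_
    · filter_upwards [Filter.Ioi_mem_atTop (0:ℝ)] with s hs
      have h1 : 0 ≤ erf (Real.sqrt (C*s)) := erf_nonneg (Real.sqrt_nonneg _)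
      have h2 : erf (Real.sqrt (C*s)) ≤ 1 := erf_le_one (Real.sqrt_nonneg _)
      have he := (Real.exp_pos (-s*r)).le
      simp only [hfdef]
      have hb := mul_le_mul_of_nonneg_left (mul_le_mul_of_nonneg_left h2 he)
        (by positivity : (0:ℝ) ≤ 1/r)
      simp only [mul_one] at hb
      linarith
    · filter_upwards [Filter.Ioi_mem_atTop (0:ℝ)] with s hs
      have h1 : 0 ≤ erf (Real.sqrt (C*s)) := erf_nonneg (Real.sqrt_nonneg _)
      have he := (Real.exp_pos (-s*r)).le
      simp only [hfdef]
      have : 0 ≤ (1/r) * (Real.exp (-s*r) * erf (Real.sqrt (C*s))) := by positivity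
      linarith
  have hFTC := integral_Ioi_of_hasDerivAt_of_tendsto hcont hderiv (hAint.sub hBint) htend
  have hf0 : f 0 = 0 := by simp [hfdef, erf_zero]
  rw [hf0, sub_zero] at hFTC
  have hsplit : ∫ s in Ioi (0:ℝ), (A s - B s) = (∫ s in Ioi (0:ℝ), A s) - ∫ s in Ioi (0:ℝ), B s :=
    integral_sub hAint hBint
  have hBval : ∫ s in Ioi (0:ℝ), B s =
      (C/(r*Real.sqrt π) * (Real.sqrt C)⁻¹) * (Real.sqrt π / Real.sqrt (C+r)) := by
    have heq : ∀ s ∈ Ioi (0:ℝ), B s = (C/(r*Real.sqrt π) * (Real.sqrt C)⁻¹) *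
        (s ^ (-(1/2) : ℝ) * Real.exp (-((C+r) * s))) := by
      intro s hs
      have hs' : (0:ℝ) < s := hs
      simp only [hB]
      rw [Real.sqrt_mul hC.le, Real.rpow_neg hs'.le, ← Real.sqrt_eq_rpow]
      have h1 : Real.sqrt s ≠ 0 := (Real.sqrt_pos.2 hs').ne'
      have h2 : Real.sqrt C ≠ 0 := (Real.sqrt_pos.2 hC).ne'
      field_simp
    rw [setIntegral_congr_fun measurableSet_Ioi heq, integral_const_mul,
      integral_exp_div_sqrt (by linarith : (0:ℝ) < C + r)]
  have : (0:ℝ) = (∫ s in Ioi (0:ℝ), A s) - ∫ s in Ioi (0:ℝ), B s := by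
    rw [← hsplit, hFTC]
  have hAval : ∫ s in Ioi (0:ℝ), A s = ∫ s in Ioi (0:ℝ), B s := by linarith
  rw [hAval, hBval]
  have h1 : Real.sqrt π ≠ 0 := (Real.sqrt_pos.2 Real.pi_pos).ne'
  have h2 : Real.sqrt C ≠ 0 := (Real.sqrt_pos.2 hC).ne'
  have h3 : Real.sqrt (C+r) ≠ 0 := (Real.sqrt_pos.2 (by linarith)).ne'
  have h4 : Real.sqrt C * Real.sqrt C = C := Real.mul_self_sqrt hC.le
  field_simp
  linear_combination (-1 : ℝ) * h4

theorem stmt0 (r C : ℝ) (hr : 0 < r) (hC : 0 < C) :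
    Real.sqrt (C + r) / r = ∫ s in Ioi (0:ℝ), Real.exp (-s * r) * fker s C := by
  have hCr : (0:ℝ) < C + r := by linarith
  have heq : ∀ s ∈ Ioi (0:ℝ), Real.exp (-s * r) * fker s C =
      (1/Real.sqrt π) * (s ^ (-(1/2) : ℝ) * Real.exp (-((C+r) * s)))
        + Real.sqrt C * (Real.exp (-s*r) * erf (Real.sqrt (C*s))) := by
    intro s hs
    have hs' : (0:ℝ) < s := hs
    unfold fker
    rw [Real.sqrt_mul Real.pi_pos.le s, Real.sqrt_mul (by positivity : (0:ℝ) ≤ π * C) s,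
      Real.sqrt_mul Real.pi_pos.le C, Real.rpow_neg hs'.le, ← Real.sqrt_eq_rpow]
    have hE : Real.exp (-((C+r)*s)) = Real.exp (-s*r) * Real.exp (-C*s) := by
      rw [← Real.exp_add]; ring_nf
    rw [hE]
    have h1 : Real.sqrt π ≠ 0 := (Real.sqrt_pos.2 Real.pi_pos).ne'
    have h2 : Real.sqrt s ≠ 0 := (Real.sqrt_pos.2 hs').ne'
    field_simp
  have int1 : IntegrableOn (fun s : ℝ =>
      (1/Real.sqrt π) * (s ^ (-(1/2) : ℝ) * Real.exp (-((C+r) * s)))) (Ioi 0) :=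
    (integrableOn_exp_div_sqrt hCr).const_mul _
  have int2 : IntegrableOn (fun s : ℝ =>
      Real.sqrt C * (Real.exp (-s*r) * erf (Real.sqrt (C*s)))) (Ioi 0) :=
    (integrableOn_A hr hC).const_mul _
  rw [setIntegral_congr_fun measurableSet_Ioi heq, integral_add int1 int2,
    integral_const_mul, integral_const_mul, integral_exp_div_sqrt hCr, laplace_erf hr hC]
  have h1 : Real.sqrt π ≠ 0 := (Real.sqrt_pos.2 Real.pi_pos).ne'
  have h3 : Real.sqrt (C+r) ≠ 0 := (Real.sqrt_pos.2 hCr).ne'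
  have h4 : Real.sqrt (C+r) * Real.sqrt (C+r) = C + r := Real.mul_self_sqrt hCr.le
  have h5 : Real.sqrt C * Real.sqrt C = C := Real.mul_self_sqrt hC.le
  have e1 : (1:ℝ)/Real.sqrt π * (Real.sqrt π/Real.sqrt (C+r)) = 1/Real.sqrt (C+r) := by
    field_simp
  have e2 : Real.sqrt C * (Real.sqrt C/(r*Real.sqrt (C+r))) = C/(r*Real.sqrt (C+r)) := by
    rw [mul_div_assoc', h5]
  rw [e1, e2]
  rw [div_add_div _ _ h3 (by positivity : r * Real.sqrt (C+r) ≠ 0)]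
  rw [div_eq_div_iff (by positivity) (by positivity)]
  ring_nf
  linear_combination (r * Real.sqrt (C+r)) * h4
end

section
/- For every σ > 0 and every s > 0, (√2/σ) f(s; σ²/8) - 1/2 ≥ 0, where f(s;C) = (1/√(πs)) (e^{-C s} + √(π C s) erf(√(C s))). -/
open Real MeasureTheory Set

lemma int_t_exp (x : ℝ) : ∫ t in Ioi x, t * Real.exp (-t^2) = Real.exp (-x^2) / 2 := by
  have h := integral_Ioi_of_hasDerivAt_of_tendsto'
      (f := fun t : ℝ => -Real.exp (-t^2) / 2) (f' := fun t : ℝ => t * Real.exp (-t^2))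
      (a := x) (m := 0)
      (fun t _ => by
        have : HasDerivAt (fun t : ℝ => -Real.exp (-t^2) / 2) (t * Real.exp (-t^2)) t := by
          have h1 : HasDerivAt (fun t : ℝ => -t^2) (-(2*t)) t := by
            simpa [Pi.neg_def] using ((hasDerivAt_pow 2 t).neg)
          have := (h1.exp).fun_neg.div_const 2
          rw [show t * Real.exp (-t^2) = -(Real.exp (-t^2) * -(2*t)) / 2 by ring]
          exact this
        exact this)
      (by
        have := (integrable_mul_exp_neg_mul_sq (b := 1) one_pos).integrableOn (s := Ioi x)
        simpa using this)
      (by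
        have h1 : Filter.Tendsto (fun t : ℝ => Real.exp (-t^2)) Filter.atTop (nhds 0) := by
          have h0 : Filter.Tendsto (fun t : ℝ => t^2) Filter.atTop Filter.atTop :=
            Filter.tendsto_pow_atTop (by norm_num)
          have := Real.tendsto_exp_neg_atTop_nhds_zero.comp h0
          simp only [Function.comp_def] at this; exact this
        have := (h1.neg).div_const 2
        simpa using this)
  rw [h]; ring

lemma tail_le (x : ℝ) (hx : 0 < x) :
    ∫ t in Ioi x, Real.exp (-t^2) ≤ Real.exp (-x^2) / (2*x) := by
  have hmono : ∫ t in Ioi x, Real.exp (-t^2) ≤ ∫ t in Ioi x, (t/x) * Real.exp (-t^2) := by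
    apply setIntegral_mono_on
    · have := (integrable_exp_neg_mul_sq (b := 1) one_pos).integrableOn (s := Ioi x)
      simpa using this
    · have h0 := ((integrable_mul_exp_neg_mul_sq (b := 1) one_pos).integrableOn (s := Ioi x)).const_mul x⁻¹
      have he : (fun t : ℝ => (t/x) * Real.exp (-t^2)) = fun t : ℝ => x⁻¹ * (t * Real.exp (-1*t^2)) := by
        funext t; rw [neg_one_mul]; ring
      rw [he]; exact h0
    · exact measurableSet_Ioi
    · intro t ht
      have htx : x ≤ t := le_of_lt ht
      have h1 : (1:ℝ) ≤ t / x := (one_le_div hx).2 htx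
      nlinarith [Real.exp_pos (-t^2)]
  have heq : ∫ t in Ioi x, (t/x) * Real.exp (-t^2) = Real.exp (-x^2) / (2*x) := by
    have : ∫ t in Ioi x, (t/x) * Real.exp (-t^2) = (1/x) * ∫ t in Ioi x, t * Real.exp (-t^2) := by
      rw [← integral_const_mul]
      congr 1; ext t; ring
    rw [this, int_t_exp]; field_simp
  linarith

lemma key (x : ℝ) (hx : 0 < x) :
    Real.sqrt π * x ≤ Real.exp (-x^2) + Real.sqrt π * x * erf x := by
  have hπ : (0:ℝ) < Real.sqrt π := Real.sqrt_pos.2 Real.pi_pos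
  have hsplit : (∫ t in (0:ℝ)..x, Real.exp (-t^2))
      = Real.sqrt π / 2 - ∫ t in Ioi x, Real.exp (-t^2) := by
    have h1 : ∫ t in Ioi (0:ℝ), Real.exp (-t^2) = Real.sqrt π / 2 := by
      have := integral_gaussian_Ioi 1
      simpa using this
    have h2 : (∫ t in Ioc (0:ℝ) x, Real.exp (-t^2)) + ∫ t in Ioi x, Real.exp (-t^2)
        = ∫ t in Ioi (0:ℝ), Real.exp (-t^2) := by
      rw [← setIntegral_union (Set.Ioc_disjoint_Ioi le_rfl) measurableSet_Ioi]
      · rw [Set.Ioc_union_Ioi_eq_Ioi hx.le]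
      · have := (integrable_exp_neg_mul_sq (b := 1) one_pos).integrableOn (s := Ioc (0:ℝ) x)
        simpa using this
      · have := (integrable_exp_neg_mul_sq (b := 1) one_pos).integrableOn (s := Ioi x)
        simpa using this
    rw [intervalIntegral.integral_of_le hx.le]
    rw [h1] at h2
    linarith
  have htail := tail_le x hx
  have herf : Real.sqrt π * x * erf x
      = Real.sqrt π * x - 2 * x * ∫ t in Ioi x, Real.exp (-t^2) := by
    rw [erf, hsplit]
    field_simp
  rw [herf]
  have : 2 * x * ∫ t in Ioi x, Real.exp (-t^2) ≤ Real.exp (-x^2) := by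
    have h2 := mul_le_mul_of_nonneg_left htail (by positivity : (0:ℝ) ≤ 2*x)
    calc 2 * x * ∫ t in Ioi x, Real.exp (-t^2) ≤ 2*x * (Real.exp (-x^2)/(2*x)) := h2
      _ = Real.exp (-x^2) := by field_simp
  linarith

theorem stmt5 (σ : ℝ) (hσ : 0 < σ) (s : ℝ) (hs : 0 < s) :
    (Real.sqrt 2 / σ) * fker s (σ^2 / 8) - 1/2 ≥ 0 := by
  set C := σ^2/8 with hC
  have hCpos : 0 < C := by positivity
  have hCs : 0 < C * s := by positivity
  set x := Real.sqrt (C*s) with hxdef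
  have hx : 0 < x := Real.sqrt_pos.2 hCs
  have hx2 : x^2 = C*s := Real.sq_sqrt hCs.le
  have hπ : 0 < Real.sqrt π := Real.sqrt_pos.2 Real.pi_pos
  have hs' : 0 < Real.sqrt s := Real.sqrt_pos.2 hs
  have h1 : Real.sqrt (π*s) = Real.sqrt π * Real.sqrt s := Real.sqrt_mul Real.pi_pos.le s
  have h2 : Real.sqrt (π*C*s) = Real.sqrt π * x := by
    rw [mul_assoc, Real.sqrt_mul Real.pi_pos.le]
  have h3 : Real.exp (-C*s) = Real.exp (-x^2) := by rw [hx2]; ring_nf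
  have hfker : fker s C
      = (1/(Real.sqrt π * Real.sqrt s)) * (Real.exp (-x^2) + Real.sqrt π * x * erf x) := by
    rw [fker, h1, h2, h3, ← hxdef, mul_assoc]
  have hxs : x = Real.sqrt C * Real.sqrt s := Real.sqrt_mul hCpos.le s
  have h8 : Real.sqrt 8 = 2 * Real.sqrt 2 := by
    rw [show (8:ℝ) = 4*2 by norm_num, Real.sqrt_mul (by norm_num),
      show Real.sqrt 4 = 2 by rw [show (4:ℝ) = 2^2 by norm_num, Real.sqrt_sq (by norm_num)]]
  have hsC : Real.sqrt C = σ / (2 * Real.sqrt 2) := by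
    rw [hC, Real.sqrt_div (by positivity) 8, Real.sqrt_sq hσ.le, h8]
  have h2' : (0:ℝ) < Real.sqrt 2 := Real.sqrt_pos.2 (by norm_num)
  have heq : (Real.sqrt 2 / σ) * ((1/(Real.sqrt π * Real.sqrt s)) * (Real.sqrt π * x)) = 1/2 := by
    rw [hxs, hsC]
    field_simp
  have hkey := key x hx
  have hmul : (Real.sqrt 2 / σ) * ((1/(Real.sqrt π * Real.sqrt s)) * (Real.sqrt π * x))
      ≤ (Real.sqrt 2 / σ) * fker s C := by
    rw [hfker]
    apply mul_le_mul_of_nonneg_left _ (by positivity)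
    apply mul_le_mul_of_nonneg_left _ (by positivity)
    linarith
  rw [heq] at hmul
  linarith
end
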